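/- arXiv:2009.12342 — 8 statements merged into one kernel-verified Lean document; each statement's English description precedes it below -/
import Mathlib

section
/- Let (V, ω) be a complex symplectic vector space with a direct-sum decomposition V = V^P ⊕ V^P̄ into two Lagrangian subspaces; write ξ = ξ^P + ξ^P̄. For ξ₁, ξ₂ ∈ V set D_i(φ) := 2ω(ξ_i, φ). Then −(i/2)·(D₁(−ξ₂^P) + D₂(ξ₁^P̄)) = 2i·ω(ξ₁^P̄, ξ₂^P). (This evaluates the time-ordered two-point vacuum correlation function ρ^{D₁D₂}(W^P) = 2iω(ξ₁^P̄, ξ₂^P), where −ξ₂^P and ξ₁^P̄ are the inhomogeneous solutions satisfying the vacuum boundary conditions on the two sides of the separating hypersurface.) -/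
/-- Evaluation of the time-ordered two-point vacuum correlation function
ρ^{D₁D₂}(W^P) = −(i/2)(D₁(−ξ₂^P) + D₂(ξ₁^P̄)) = 2iω(ξ₁^P̄, ξ₂^P). -/
theorem stmt_4 (V : Type*) [AddCommGroup V] [Module ℂ V]
    (ω : V →ₗ[ℂ] V →ₗ[ℂ] ℂ)
    (hanti : ∀ x y : V, ω x y = - ω y x)
    (hnondeg : ∀ x : V, (∀ y : V, ω x y = 0) → x = 0)
    (P Pb : Submodule ℂ V)
    (hPiso : ∀ x ∈ P, ∀ y ∈ P, ω x y = 0)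
    (hPcoiso : ∀ y : V, (∀ x ∈ P, ω x y = 0) → y ∈ P)
    (hPbiso : ∀ x ∈ Pb, ∀ y ∈ Pb, ω x y = 0)
    (hPbcoiso : ∀ y : V, (∀ x ∈ Pb, ω x y = 0) → y ∈ Pb)
    (p q : V →ₗ[ℂ] V)
    (hp : ∀ x : V, p x ∈ P) (hq : ∀ x : V, q x ∈ Pb)
    (hpq : ∀ x : V, p x + q x = x)
    (hdisj : P ⊓ Pb = ⊥) :
    ∀ ξ₁ ξ₂ : V,
      -(Complex.I / 2) * (2 * ω ξ₁ (-(p ξ₂)) + 2 * ω ξ₂ (q ξ₁)) =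
        2 * Complex.I * ω (q ξ₁) (p ξ₂) := by
  intro ξ₁ ξ₂
  have h1 : ω ξ₁ (p ξ₂) = ω (q ξ₁) (p ξ₂) := by
    conv_lhs => rw [← hpq ξ₁]
    rw [map_add, LinearMap.add_apply, hPiso _ (hp ξ₁) _ (hp ξ₂), zero_add]
  have h2 : ω ξ₂ (q ξ₁) = - ω (q ξ₁) (p ξ₂) := by
    conv_lhs => rw [← hpq ξ₂]
    rw [map_add, LinearMap.add_apply, hPbiso _ (hq ξ₂) _ (hq ξ₁), add_zero,
      hanti (p ξ₂) (q ξ₁)]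
  rw [map_neg, h1, h2]
  ring
end

section
/- Let (V, ω) be a complex symplectic vector space with a direct-sum decomposition V = L_int ⊕ L^P into two Lagrangian subspaces; write ξ = ξ^int + ξ^ext with ξ^int ∈ L_int and ξ^ext ∈ L^P. Let η ∈ L^P and let D : V → ℂ be a complex-linear functional satisfying D(δ) = 2ω(δ, η) for all δ ∈ L_int. Then for every ξ ∈ V: exp((i/2)·D(η + ξ^int) + i·ω(ξ, η + ξ^int − (1/2)ξ)) = exp(i·ω(ξ, ξ^int)) · exp(i·D(ξ^int)) · exp((i/2)·D(η)). (This is the factorization ρ_M^F(K^P_ξ) = ρ_M(K^P_ξ) · F(ξ^int) · ρ_M^F(W^P) of the correlation function of the Weyl observable F = exp(iD) with the coherent boundary observable determined by ξ, for a general polarization L^P transversal to the space L_int of interior solutions.) -/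
/-- The factorization ρ_M^F(K^P_ξ) = ρ_M(K^P_ξ)·F(ξ^int)·ρ_M^F(W^P) of the
correlation function of a Weyl observable with a coherent boundary observable, for a general
polarization L^P transversal to the space L_int of interior solutions. -/
theorem stmt_6 (V : Type*) [AddCommGroup V] [Module ℂ V]
    (ω : V →ₗ[ℂ] V →ₗ[ℂ] ℂ)
    (hanti : ∀ x y : V, ω x y = - ω y x)
    (hnondeg : ∀ x : V, (∀ y : V, ω x y = 0) → x = 0)
    (Lint LP : Submodule ℂ V)
    (hintiso : ∀ x ∈ Lint, ∀ y ∈ Lint, ω x y = 0)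
    (hintcoiso : ∀ y : V, (∀ x ∈ Lint, ω x y = 0) → y ∈ Lint)
    (hPiso : ∀ x ∈ LP, ∀ y ∈ LP, ω x y = 0)
    (hPcoiso : ∀ y : V, (∀ x ∈ LP, ω x y = 0) → y ∈ LP)
    -- V = L_int ⊕ L^P with projections ξ ↦ ξ^int, ξ ↦ ξ^ext
    (pint pext : V →ₗ[ℂ] V)
    (hpint : ∀ x : V, pint x ∈ Lint) (hpext : ∀ x : V, pext x ∈ LP)
    (hsum : ∀ x : V, pint x + pext x = x)
    (hdisj : Lint ⊓ LP = ⊥)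
    -- η ∈ L^P and the linear observable D with D(δ) = 2ω(δ, η) for interior solutions δ
    (η : V) (hη : η ∈ LP)
    (D : V →ₗ[ℂ] ℂ)
    (hD : ∀ δ ∈ Lint, D δ = 2 * ω δ η) :
    ∀ ξ : V,
      Complex.exp ((Complex.I / 2) * D (η + pint ξ) +
          Complex.I * ω ξ (η + pint ξ - (2:ℂ)⁻¹ • ξ)) =
        Complex.exp (Complex.I * ω ξ (pint ξ)) *
          Complex.exp (Complex.I * D (pint ξ)) *
          Complex.exp ((Complex.I / 2) * D η) := by
  intro ξ
  have h0 : ω ξ ξ = 0 := by linear_combination (hanti ξ ξ) / 2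
  have h1 : ω (pext ξ) η = 0 := hPiso _ (hpext ξ) _ hη
  have h2 : D (pint ξ) = 2 * ω (pint ξ) η := hD _ (hpint ξ)
  have h3 : ω ξ η = ω (pint ξ) η := by
    conv_lhs => rw [← hsum ξ]
    simp [h1]
  rw [← Complex.exp_add, ← Complex.exp_add]
  congr 1
  simp only [map_add, map_sub, map_smul, LinearMap.add_apply, LinearMap.sub_apply,
    LinearMap.smul_apply, smul_eq_mul]
  linear_combination Complex.I * h3 - (Complex.I/2) * h2 - (Complex.I/2) * h0
end

section
/- Let (V, ω) be a complex symplectic vector space with a direct-sum decomposition V = L_int ⊕ L^P into two Lagrangian subspaces; write ξ = ξ^int + ξ^ext with ξ^int ∈ L_int and ξ^ext ∈ L^P. Let η ∈ L^P and let D : V → ℂ be a complex-linear functional satisfying D(δ) = 2ω(δ, η) for all δ ∈ L_int. Then for every ξ ∈ η + L_int and every τ ∈ V: (1/2)·D(η) + D((ξ+τ)^int) + ω(ξ+τ, (ξ+τ)^int) = ω(τ, τ^int) + (1/2)·D(ξ) + ω(τ, ξ). (Exponentiated with the factor i, this is the identity ρ_M^F(K^P_{ξ+τ}) = ρ_M(K^P_τ)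 · exp((i/2)D(ξ) + iω(τ, ξ)) for the Weyl observable F = exp(iD) and any solution ξ of the D-modified equations of motion.) -/
/-- The identity underlying ρ_M^F(K^P_{ξ+τ}) = ρ_M(K^P_τ)·exp((i/2)D(ξ)+iω(τ,ξ))
for a Weyl observable F = exp(iD) and a solution ξ of the D-modified equations of motion. -/
theorem stmt_7 (V : Type*) [AddCommGroup V] [Module ℂ V]
    (ω : V →ₗ[ℂ] V →ₗ[ℂ] ℂ)
    (hanti : ∀ x y : V, ω x y = - ω y x)
    (hnondeg : ∀ x : V, (∀ y : V, ω x y = 0) → x = 0)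
    (Lint LP : Submodule ℂ V)
    (hintiso : ∀ x ∈ Lint, ∀ y ∈ Lint, ω x y = 0)
    (hintcoiso : ∀ y : V, (∀ x ∈ Lint, ω x y = 0) → y ∈ Lint)
    (hPiso : ∀ x ∈ LP, ∀ y ∈ LP, ω x y = 0)
    (hPcoiso : ∀ y : V, (∀ x ∈ LP, ω x y = 0) → y ∈ LP)
    -- V = L_int ⊕ L^P with projections ξ ↦ ξ^int, ξ ↦ ξ^ext
    (pint pext : V →ₗ[ℂ] V)
    (hpint : ∀ x : V, pint x ∈ Lint) (hpext : ∀ x : V, pext x ∈ LP)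
    (hsum : ∀ x : V, pint x + pext x = x)
    (hdisj : Lint ⊓ LP = ⊥)
    -- η ∈ L^P and the linear observable D with D(δ) = 2ω(δ, η) for interior solutions δ
    (η : V) (hη : η ∈ LP)
    (D : V →ₗ[ℂ] ℂ)
    (hD : ∀ δ ∈ Lint, D δ = 2 * ω δ η) :
    ∀ ξ : V, ξ - η ∈ Lint → ∀ τ : V,
      (2:ℂ)⁻¹ * D η + D (pint (ξ + τ)) + ω (ξ + τ) (pint (ξ + τ)) =
        ω τ (pint τ) + (2:ℂ)⁻¹ * D ξ + ω τ ξ := by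
  intro ξ hξ τ
  set δ := ξ - η with hδdef
  -- pint fixes Lint
  have hfix : ∀ x ∈ Lint, pint x = x := by
    intro x hx
    have h1 : pint x - x ∈ Lint := sub_mem (hpint x) hx
    have h2 : pint x - x ∈ LP := by
      have : pint x - x = -pext x := by
        have := hsum x; linear_combination (norm := module) this
      rw [this]; exact neg_mem (hpext x)
    have : pint x - x ∈ Lint ⊓ LP := ⟨h1, h2⟩
    rw [hdisj] at this
    simpa [sub_eq_zero] using this
  -- pint kills LP
  have hkill : ∀ x ∈ LP, pint x = 0 := by
    intro x hx
    have h1 : pint x ∈ Lint := hpint x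
    have h2 : pint x ∈ LP := by
      have : pint x = x - pext x := by
        have := hsum x; linear_combination (norm := module) this
      rw [this]; exact sub_mem hx (hpext x)
    have : pint x ∈ Lint ⊓ LP := ⟨h1, h2⟩
    rw [hdisj] at this
    simpa using this
  have hξeq : ξ = η + δ := by rw [hδdef]; abel
  have hpξτ : pint (ξ + τ) = δ + pint τ := by
    rw [hξeq, add_assoc, map_add, hkill η hη, map_add, hfix δ hξ, zero_add]
  rw [hpξτ, hξeq]
  have e1 : D δ = 2 * ω δ η := hD δ hξ
  have e2 : D (pint τ) = 2 * ω (pint τ) η := hD (pint τ) (hpint τ)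
  have e3 : ω δ δ = 0 := hintiso δ hξ δ hξ
  have e4 : ω δ (pint τ) = 0 := hintiso δ hξ (pint τ) (hpint τ)
  have e5 : ω (pext τ) η = 0 := hPiso (pext τ) (hpext τ) η hη
  have e6 : ω η δ = - ω δ η := hanti η δ
  have e7 : ω η (pint τ) = - ω (pint τ) η := hanti η (pint τ)
  have e8 : τ = pint τ + pext τ := (hsum τ).symm
  have e9 : ω τ η = ω (pint τ) η + ω (pext τ) η := by
    calc ω τ η = ω (pint τ + pext τ) η := by rw [hsum τ]
    _ = ω (pint τ) η + ω (pext τ) η := by simp [map_add]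
  simp only [map_add, LinearMap.add_apply]
  linear_combination ((1:ℂ)/2) * e1 + e2 + e3 + e4 - e5 + e6 + e7 - e9
end

section
/- Let (V₁, ω₁) and (W, ω_W) be complex symplectic vector spaces and let V := V₁ ⊕ W ⊕ W carry the symplectic form ω((a,b,c),(a′,b′,c′)) := ω₁(a,a′) + ω_W(b,b′) − ω_W(c,c′). Let L_int ⊆ V be a Lagrangian subspace, let L₁ ⊆ V₁ be a Lagrangian subspace of (V₁, ω₁), let L_Σ be a subspace of {0} ⊕ W ⊕ W, and let Δ := {(0,w,w) : w ∈ W}. Assume that L^P := L₁ ⊕ L_Σ and L^{P₁,m} := L₁ ⊕ Δ are Lagrangian subspaces of (V, ω), that V = L_int ⊕ L^P, and that V = L_int ⊕ L^{P₁,m}. For x ∈ V write x = x^{int} + x^{ext} with x^{int} ∈ L_int, x^{ext} ∈ L^P, and x = x^{int′} + x^{ext′} with x^{int′} ∈ L_int, x^{ext′} ∈ L^{P₁,m}. Let π(a,b,c) := (0,b,c) and define Q : V → ℂ by Q(φ) := ω(π(φ)^{ext′}, π(φ)^{ext}). Then: (1) Q(φ + (δ,0,0)) = Q(φ) for all φ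 ∈ V and all δ ∈ V₁; (2) Q(φ + ((0,δ,δ′))^{int}) = Q(φ) for all φ ∈ V and all δ, δ′ ∈ W. (These are the two invariance properties of the slice observable G′(φ) = exp(iQ(φ)) that effects the composition of amplitudes along the gluing hypersurface.) -/
/-- The two invariance properties of the slice observable
Q(φ) = ω(π(φ)^{ext′}, π(φ)^{ext}) effecting the composition of amplitudes along the gluing
hypersurface, where V = V₁ ⊕ W ⊕ W with ω((a,b,c),(a′,b′,c′)) = ω₁(a,a′) + ω_W(b,b′) − ω_W(c,c′),
L^P = L₁ ⊕ L_Σ and L^{P₁,m} = L₁ ⊕ Δ. -/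
theorem stmt_9 (V₁ W : Type*) [AddCommGroup V₁] [Module ℂ V₁]
    [AddCommGroup W] [Module ℂ W]
    -- symplectic forms on V₁ and W
    (ω₁ : V₁ →ₗ[ℂ] V₁ →ₗ[ℂ] ℂ)
    (hanti₁ : ∀ x y : V₁, ω₁ x y = - ω₁ y x)
    (hnondeg₁ : ∀ x : V₁, (∀ y : V₁, ω₁ x y = 0) → x = 0)
    (ωW : W →ₗ[ℂ] W →ₗ[ℂ] ℂ)
    (hantiW : ∀ x y : W, ωW x y = - ωW y x)
    (hnondegW : ∀ x : W, (∀ y : W, ωW x y = 0) → x = 0)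
    -- the symplectic form on V = V₁ × W × W
    (Ω : (V₁ × W × W) →ₗ[ℂ] (V₁ × W × W) →ₗ[ℂ] ℂ)
    (hΩ : ∀ x y : V₁ × W × W,
      Ω x y = ω₁ x.1 y.1 + ωW x.2.1 y.2.1 - ωW x.2.2 y.2.2)
    -- L_int Lagrangian in (V, Ω)
    (Lint : Submodule ℂ (V₁ × W × W))
    (hintiso : ∀ x ∈ Lint, ∀ y ∈ Lint, Ω x y = 0)
    (hintcoiso : ∀ y : V₁ × W × W, (∀ x ∈ Lint, Ω x y = 0) → y ∈ Lint)
    -- L₁ Lagrangian in (V₁, ω₁)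
    (L₁ : Submodule ℂ V₁)
    (hL₁iso : ∀ x ∈ L₁, ∀ y ∈ L₁, ω₁ x y = 0)
    (hL₁coiso : ∀ y : V₁, (∀ x ∈ L₁, ω₁ x y = 0) → y ∈ L₁)
    -- L_Σ a subspace of {0} ⊕ W ⊕ W
    (LSig : Submodule ℂ (V₁ × W × W))
    (hLSig : ∀ x ∈ LSig, x.1 = (0 : V₁))
    -- L^P = L₁ ⊕ L_Σ and L^{P₁,m} = L₁ ⊕ Δ, where Δ = {(0,w,w)}
    (LP LP1m : Submodule ℂ (V₁ × W × W))
    (hLP : ∀ x : V₁ × W × W, x ∈ LP ↔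
      ∃ a ∈ L₁, ∃ s ∈ LSig, x = ((a, (0:W), (0:W)) : V₁ × W × W) + s)
    (hLP1m : ∀ x : V₁ × W × W, x ∈ LP1m ↔
      ∃ a ∈ L₁, ∃ w : W, x = ((a, (0:W), (0:W)) : V₁ × W × W) + ((0:V₁), w, w))
    -- L^P and L^{P₁,m} Lagrangian in (V, Ω)
    (hLPiso : ∀ x ∈ LP, ∀ y ∈ LP, Ω x y = 0)
    (hLPcoiso : ∀ y : V₁ × W × W, (∀ x ∈ LP, Ω x y = 0) → y ∈ LP)
    (hLP1miso : ∀ x ∈ LP1m, ∀ y ∈ LP1m, Ω x y = 0)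
    (hLP1mcoiso : ∀ y : V₁ × W × W, (∀ x ∈ LP1m, Ω x y = 0) → y ∈ LP1m)
    -- V = L_int ⊕ L^P with projections x ↦ x^int, x ↦ x^ext
    (pint pext : (V₁ × W × W) →ₗ[ℂ] (V₁ × W × W))
    (hpint : ∀ x, pint x ∈ Lint) (hpext : ∀ x, pext x ∈ LP)
    (hsum : ∀ x : V₁ × W × W, pint x + pext x = x)
    (hdisj : Lint ⊓ LP = ⊥)
    -- V = L_int ⊕ L^{P₁,m} with projections x ↦ x^{int′}, x ↦ x^{ext′}
    (pint' pext' : (V₁ × W × W) →ₗ[ℂ] (V₁ × W × W))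
    (hpint' : ∀ x, pint' x ∈ Lint) (hpext' : ∀ x, pext' x ∈ LP1m)
    (hsum' : ∀ x : V₁ × W × W, pint' x + pext' x = x)
    (hdisj' : Lint ⊓ LP1m = ⊥)
    -- π(a,b,c) = (0,b,c) and Q(φ) = Ω(π(φ)^{ext′}, π(φ)^{ext})
    (π : (V₁ × W × W) →ₗ[ℂ] (V₁ × W × W))
    (hπ : ∀ x : V₁ × W × W, π x = ((0 : V₁), x.2.1, x.2.2))
    (Q : (V₁ × W × W) → ℂ)
    (hQ : ∀ x : V₁ × W × W, Q x = Ω (pext' (π x)) (pext (π x))) :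
    -- (1) invariance under translation by elements of V₁
    (∀ (φ : V₁ × W × W) (δ : V₁), Q (φ + ((δ, (0:W), (0:W)) : V₁ × W × W)) = Q φ) ∧
    -- (2) invariance under translation by ((0,δ,δ′))^{int}
    (∀ (φ : V₁ × W × W) (δ δ' : W),
      Q (φ + pint (((0:V₁), δ, δ') : V₁ × W × W)) = Q φ) := by

  -- pext vanishes on Lint
  have hextLint : ∀ x ∈ Lint, pext x = 0 := by
    intro x hx
    have h1 : pext x ∈ Lint := by
      have he : pext x = x - pint x := eq_sub_of_add_eq' (hsum x)
      rw [he]; exact Submodule.sub_mem _ hx (hpint x)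
    have : pext x ∈ Lint ⊓ LP := ⟨h1, hpext x⟩
    rw [hdisj, Submodule.mem_bot] at this
    exact this
  have hextLint' : ∀ x ∈ Lint, pext' x = 0 := by
    intro x hx
    have h1 : pext' x ∈ Lint := by
      have he : pext' x = x - pint' x := eq_sub_of_add_eq' (hsum' x)
      rw [he]; exact Submodule.sub_mem _ hx (hpint' x)
    have : pext' x ∈ Lint ⊓ LP1m := ⟨h1, hpext' x⟩
    rw [hdisj', Submodule.mem_bot] at this
    exact this
  -- pext fixes LP, pext' fixes LP1m
  have hfixLP : ∀ x ∈ LP, pext x = x := by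
    intro x hx
    have h1 : pint x ∈ LP := by
      have he : pint x = x - pext x := eq_sub_of_add_eq (hsum x)
      rw [he]; exact Submodule.sub_mem _ hx (hpext x)
    have h0 : pint x = 0 := by
      have : pint x ∈ Lint ⊓ LP := ⟨hpint x, h1⟩
      rw [hdisj, Submodule.mem_bot] at this; exact this
    have h := hsum x
    rw [h0, zero_add] at h; exact h
  have hfixLP1m : ∀ x ∈ LP1m, pext' x = x := by
    intro x hx
    have h1 : pint' x ∈ LP1m := by
      have he : pint' x = x - pext' x := eq_sub_of_add_eq (hsum' x)
      rw [he]; exact Submodule.sub_mem _ hx (hpext' x)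
    have h0 : pint' x = 0 := by
      have : pint' x ∈ Lint ⊓ LP1m := ⟨hpint' x, h1⟩
      rw [hdisj', Submodule.mem_bot] at this; exact this
    have h := hsum' x
    rw [h0, zero_add] at h; exact h
  constructor
  · intro φ δ
    have hπeq : π (φ + ((δ, (0:W), (0:W)) : V₁ × W × W)) = π φ := by
      rw [hπ, hπ]; simp
    rw [hQ, hQ, hπeq]
  · intro φ δ δ'
    set ψ : V₁ × W × W := ((0:V₁), δ, δ') with hψ
    obtain ⟨a, ha, s, hsmem, heq⟩ := (hLP _).1 (hpext ψ)
    set w : V₁ × W × W := ((a : V₁), (0:W), (0:W)) with hw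
    have hwLP : w ∈ LP := (hLP w).2 ⟨a, ha, 0, Submodule.zero_mem _, by simp [hw]⟩
    have hwLP1m : w ∈ LP1m := (hLP1m w).2 ⟨a, ha, 0, by simp [hw]⟩
    have hs1 : s.1 = 0 := hLSig s hsmem
    have hp1 : (pext ψ).1 = a := by rw [heq]; simp [hs1, hw]
    have hfst : (pint ψ).1 = -a := by
      have h := congrArg Prod.fst (hsum ψ)
      simp only [Prod.fst_add, hp1] at h
      exact eq_neg_of_add_eq_zero_left h
    have hπpint : π (pint ψ) = pint ψ + w := by
      rw [hπ]
      refine Prod.ext ?_ (Prod.ext ?_ ?_)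
      · simp [hw, Prod.fst_add, hfst]
      · simp [hw]
      · simp [hw]
    have hpu : pext (π (pint ψ)) = w := by
      rw [hπpint, map_add, hextLint _ (hpint ψ), hfixLP w hwLP, zero_add]
    have hpu' : pext' (π (pint ψ)) = w := by
      rw [hπpint, map_add, hextLint' _ (hpint ψ), hfixLP1m w hwLP1m, zero_add]
    have h1 : Ω (pext' (π φ)) w = 0 := hLP1miso _ (hpext' _) w hwLP1m
    have h2 : Ω w (pext (π φ)) = 0 := hLPiso w hwLP _ (hpext _)
    have h3 : Ω w w = 0 := hLPiso w hwLP w hwLP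
    rw [hQ, hQ, map_add π, map_add pext', map_add pext, hpu, hpu']
    simp [map_add, LinearMap.add_apply, h1, h2, h3]
end

section
/- Let (L, ω) be a real symplectic vector space with a positive-definite compatible complex structure J, and let {·,·} denote the complex-bilinear extension to the complexification L^ℂ of the form {φ,η} := 2ω(φ, Jη) + 2iω(φ, η) on L. For ξ ∈ L^ℂ and τ, φ ∈ L define M(ξ; τ, φ) := exp((1/2){τ,φ} + (1/2){ξ,φ} − (1/2){τ,ξ} − (1/4){ξ,ξ}), the matrix element of the quantized Weyl slice observable determined by ξ between the coherent states labeled by τ and φ. Then for all φ, τ ∈ L and ξ ∈ L^ℂ: conj(M(ξ; φ, τ)) = M(−conj(ξ); τ, φ), where conj(ξ) denotes complex conjugation on L^ℂ. (This expresses that the quantization of the ∗-conjugate observable equals the adjoint of the quantized observable: hat(F^∗) = hat(F)^†.) -/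
/-- conj(M(ξ; φ, τ)) = M(−conj(ξ); τ, φ) for the matrix elements
M(ξ; τ, φ) = exp((1/2){τ,φ} + (1/2){ξ,φ} − (1/2){τ,ξ} − (1/4){ξ,ξ}) of the quantized Weyl
slice observable between coherent states, i.e. hat(F^∗) = hat(F)^†.  The complexification
L^ℂ of the real symplectic vector space (L, ω) is modelled as a complex vector space V with
complex conjugation σ; L is the fixed-point set of σ. -/
theorem stmt_13 (V : Type*) [AddCommGroup V] [Module ℂ V]
    -- complex conjugation on the complexification
    (σ : V → V)
    (hσadd : ∀ x y : V, σ (x + y) = σ x + σ y)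
    (hσsmul : ∀ (c : ℂ) (x : V), σ (c • x) = (starRingEnd ℂ c) • σ x)
    (hσinvol : ∀ x : V, σ (σ x) = x)
    -- the complex-bilinear extension of the symplectic form
    (ω : V →ₗ[ℂ] V →ₗ[ℂ] ℂ)
    (hanti : ∀ x y : V, ω x y = - ω y x)
    (hωσ : ∀ x y : V, ω (σ x) (σ y) = starRingEnd ℂ (ω x y))
    (hnondeg : ∀ x : V, σ x = x → (∀ y : V, σ y = y → ω x y = 0) → x = 0)
    -- the complex-linear extension of the positive-definite compatible complex structure J
    (J : V →ₗ[ℂ] V)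
    (hJσ : ∀ x : V, J (σ x) = σ (J x))
    (hJJ : ∀ x : V, J (J x) = - x)
    (hJω : ∀ x y : V, ω (J x) (J y) = ω x y)
    (hJpos : ∀ x : V, σ x = x → x ≠ 0 → 0 < (2 * ω x (J x)).re)
    -- the complex-bilinear extension of {φ,η} = 2ω(φ,Jη) + 2iω(φ,η)
    (braces : V → V → ℂ)
    (hbraces : ∀ x y : V, braces x y = 2 * ω x (J y) + 2 * Complex.I * ω x y)
    -- the matrix element M(ξ; τ, φ)
    (M : V → V → V → ℂ)
    (hM : ∀ ξ τ φ : V, M ξ τ φ = Complex.exp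
      ((2:ℂ)⁻¹ * braces τ φ + (2:ℂ)⁻¹ * braces ξ φ -
        (2:ℂ)⁻¹ * braces τ ξ - (4:ℂ)⁻¹ * braces ξ ξ)) :
    ∀ φ τ : V, σ φ = φ → σ τ = τ → ∀ ξ : V,
      starRingEnd ℂ (M ξ φ τ) = M (-(σ ξ)) τ φ := by
  intro φ τ hφ hτ ξ
  have hsym : ∀ x y : V, ω y (J x) = ω x (J y) := by
    intro x y
    calc ω y (J x) = ω (J y) (J (J x)) := (hJω y (J x)).symm
      _ = ω (J y) (-x) := by rw [hJJ]
      _ = - ω (J y) x := by simp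
      _ = ω x (J y) := (hanti x (J y)).symm
  have key : ∀ x y : V, starRingEnd ℂ (braces x y) = braces (σ y) (σ x) := by
    intro x y
    rw [hbraces, hbraces, hJσ, hωσ, hωσ, hsym x y, hanti y x]
    simp [Complex.conj_I, map_ofNat]
  have hneg1 : ∀ x y : V, braces (-x) y = - braces x y := by
    intro x y; rw [hbraces, hbraces]; simp; ring
  have hneg2 : ∀ x y : V, braces x (-y) = - braces x y := by
    intro x y; rw [hbraces, hbraces]; simp; ring
  rw [hM, hM, ← Complex.exp_conj]
  congr 1
  rw [map_sub, map_sub, map_add, map_mul, map_mul, map_mul, map_mul,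
      key, key, key, key, hφ, hτ, hneg1, hneg2, hneg1, hneg2]
  simp [map_ofNat]
  ring
end

section
/- Let (L, ω) be a real symplectic vector space with a positive-definite compatible complex structure J; extend J and ω to the complexification L^ℂ, let P⁻(x) := (1/2)(x + iJx), and let {·,·} denote the complex-bilinear extension to L^ℂ of {φ,η} := 2ω(φ, Jη) + 2iω(φ, η). For ξ ∈ L^ℂ set ν := P⁻(ξ) + conj(P⁻(ξ)). Then: (i) ν ∈ L (i.e. ν is fixed by complex conjugation); (ii) {ξ, φ} = {ν, φ} for all φ ∈ L^ℂ; (iii) (1/4){ν,ν} − (1/4){ξ,ξ} = i·ω(ξ, ν). Consequently exp(−(1/4){ξ,ξ})·K_ν = exp(iω(ξ,ν))·k_ν, where K_ν is the coherent state with wave function K_ν(φ) = exp((1/2){ν,φ}) and k_ν := exp(−(1/4){ν,ν})·K_ν is its normalized version: the quantized Weyl slice observable determined by ξ maps the vacuum K₀ to exp(iω(ξ,ν))·k_ν. -/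
/-- With ν := P⁻(ξ) + conj(P⁻(ξ)): (i) ν is real; (ii) {ξ,φ} = {ν,φ} for all
φ ∈ L^ℂ; (iii) (1/4){ν,ν} − (1/4){ξ,ξ} = iω(ξ,ν); consequently the quantized Weyl slice
observable determined by ξ maps the vacuum K₀ to exp(iω(ξ,ν))·k_ν.  The complexification
L^ℂ is modelled as a complex vector space V with complex conjugation σ. -/
theorem stmt_14 (V : Type*) [AddCommGroup V] [Module ℂ V]
    -- complex conjugation on the complexification
    (σ : V → V)
    (hσadd : ∀ x y : V, σ (x + y) = σ x + σ y)
    (hσsmul : ∀ (c : ℂ) (x : V), σ (c • x) = (starRingEnd ℂ c) • σ x)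
    (hσinvol : ∀ x : V, σ (σ x) = x)
    -- the complex-bilinear extension of the symplectic form
    (ω : V →ₗ[ℂ] V →ₗ[ℂ] ℂ)
    (hanti : ∀ x y : V, ω x y = - ω y x)
    (hωσ : ∀ x y : V, ω (σ x) (σ y) = starRingEnd ℂ (ω x y))
    (hnondeg : ∀ x : V, σ x = x → (∀ y : V, σ y = y → ω x y = 0) → x = 0)
    -- the complex-linear extension of the positive-definite compatible complex structure J
    (J : V →ₗ[ℂ] V)
    (hJσ : ∀ x : V, J (σ x) = σ (J x))
    (hJJ : ∀ x : V, J (J x) = - x)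
    (hJω : ∀ x y : V, ω (J x) (J y) = ω x y)
    (hJpos : ∀ x : V, σ x = x → x ≠ 0 → 0 < (2 * ω x (J x)).re)
    -- the projection P⁻(x) = (1/2)(x + iJx)
    (Pm : V → V)
    (hPm : ∀ x : V, Pm x = (2:ℂ)⁻¹ • (x + Complex.I • J x))
    -- the complex-bilinear extension of {φ,η} = 2ω(φ,Jη) + 2iω(φ,η)
    (braces : V → V → ℂ)
    (hbraces : ∀ x y : V, braces x y = 2 * ω x (J y) + 2 * Complex.I * ω x y)
    -- ν := P⁻(ξ) + conj(P⁻(ξ))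
    (ξ ν : V) (hν : ν = Pm ξ + σ (Pm ξ)) :
    -- (i) ν is fixed by complex conjugation, i.e. ν ∈ L
    σ ν = ν ∧
    -- (ii) {ξ, φ} = {ν, φ} for all φ ∈ L^ℂ
    (∀ φ : V, braces ξ φ = braces ν φ) ∧
    -- (iii) (1/4){ν,ν} − (1/4){ξ,ξ} = i·ω(ξ, ν)
    (4:ℂ)⁻¹ * braces ν ν - (4:ℂ)⁻¹ * braces ξ ξ = Complex.I * ω ξ ν ∧
    -- consequently: exp(−(1/4){ξ,ξ})·K_ν = exp(iω(ξ,ν))·k_ν as wave functions on L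
    (∀ φ : V, σ φ = φ →
      Complex.exp (-(4:ℂ)⁻¹ * braces ξ ξ) * Complex.exp ((2:ℂ)⁻¹ * braces ν φ) =
        Complex.exp (Complex.I * ω ξ ν) *
          (Complex.exp (-(4:ℂ)⁻¹ * braces ν ν) *
            Complex.exp ((2:ℂ)⁻¹ * braces ν φ))) := by

  have hw0 : ∀ x : V, ω x x = 0 := fun x => by linear_combination (hanti x x) / 2
  have hJneg : ∀ x y : V, ω (J x) y = - ω x (J y) := fun x y => by
    calc ω (J x) y = ω (J (J x)) (J y) := (hJω _ _).symm
    _ = ω (-x) (J y) := by rw [hJJ]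
    _ = - ω x (J y) := by simp
  have hA : ∀ x y : V, braces (Complex.I • J x) y = braces x y := by
    intro x y
    rw [hbraces, hbraces]
    simp only [map_smul, LinearMap.smul_apply, smul_eq_mul]
    rw [hJω, hJneg]
    linear_combination (-2 * ω x (J y)) * Complex.I_mul_I
  have hbadd : ∀ x y z : V, braces (x + y) z = braces x z + braces y z := by
    intro x y z; simp only [hbraces, map_add, LinearMap.add_apply]; ring
  have hbsmul : ∀ (c : ℂ) (x y : V), braces (c • x) y = c * braces x y := by
    intro c x y; simp only [hbraces, map_smul, LinearMap.smul_apply, smul_eq_mul]; ring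
  have hσPm : σ (Pm ξ) = (2:ℂ)⁻¹ • (σ ξ - Complex.I • J (σ ξ)) := by
    rw [hPm, hσsmul, hσadd, hσsmul, hJσ]
    simp only [map_inv₀, map_ofNat, Complex.conj_I, sub_eq_add_neg, neg_smul, smul_add,
      smul_neg]
  -- (i)
  have h1 : σ ν = ν := by
    rw [hν, hσadd, hσinvol, add_comm]
  -- (ii)
  have h2 : ∀ φ : V, braces ξ φ = braces ν φ := by
    intro φ
    have e1 : braces (Pm ξ) φ = braces ξ φ := by
      rw [hPm, hbsmul, hbadd, hA]
      ring_nf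
    have e2 : braces (σ (Pm ξ)) φ = 0 := by
      rw [hσPm, hbsmul, sub_eq_add_neg, hbadd]
      have : braces (-(Complex.I • J (σ ξ))) φ = - braces (σ ξ) φ := by
        rw [show -(Complex.I • J (σ ξ)) = (-1 : ℂ) • (Complex.I • J (σ ξ)) by simp,
          hbsmul, hA]; ring
      rw [this]; ring
    rw [hν, hbadd, e1, e2, add_zero]
  -- J(ν - ξ) = I • (ν - ξ)
  have hJd : J (ν - ξ) = Complex.I • (ν - ξ) := by
    rw [hν, hσPm, hPm]
    simp only [map_sub, map_add, map_smul, hJJ, smul_sub, smul_add, smul_smul,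
      Complex.I_mul_I, smul_neg, neg_smul, one_smul, neg_neg]
    match_scalars <;>
      first
        | ring1
        | linear_combination (-(2:ℂ)⁻¹) * Complex.I_sq
        | linear_combination ((2:ℂ)⁻¹) * Complex.I_sq
  have h3 : braces ξ (ν - ξ) = 4 * Complex.I * ω ξ ν := by
    rw [hbraces, hJd]
    simp only [map_sub, map_smul, smul_eq_mul, hw0]
    ring
  have hbadd2 : ∀ x y z : V, braces x (y + z) = braces x y + braces x z := by
    intro x y z; simp only [hbraces, map_add, LinearMap.map_add]; ring
  have h4 : (4:ℂ)⁻¹ * braces ν ν - (4:ℂ)⁻¹ * braces ξ ξ = Complex.I * ω ξ ν := by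
    have e : braces ν ν = braces ξ ν := (h2 ν).symm
    have e2 : braces ξ ν = braces ξ (ν - ξ) + braces ξ ξ := by
      rw [← hbadd2]; congr 1; abel
    rw [e, e2, h3]; ring
  refine ⟨h1, h2, h4, ?_⟩
  intro φ _
  rw [← Complex.exp_add, ← Complex.exp_add, ← Complex.exp_add]
  congr 1
  linear_combination h4
end

section
/- Let (V, ω) be a complex symplectic vector space with three Lagrangian subspaces V^P, V^P′, V^P̄ such that V = V^P ⊕ V^P̄ and V = V^P′ ⊕ V^P̄. For ξ ∈ V write ξ = ξ⁺ + ξ⁻ with ξ⁺ ∈ V^P, ξ⁻ ∈ V^P̄ (first decomposition) and ξ = ξ^X + ξ^M with ξ^X ∈ V^P′, ξ^M ∈ V^P̄ (second decomposition). Let J : V → V be the complex-linear map equal to i·id on V^P and −i·id on V^P̄. Then the function Y : V → ℂ, Y(ξ) := exp(i·ω(ξ^X, ξ⁺)), is holomorphic with respect to J: for all a, b ∈ V, the map ℂ → ℂ sending z to Y(a + (Re z)·b + (Im z)·J(b)) is entire. (This is the holomorphicity of the wave function of the pseudo-state representing the vacuum of the polarization P′ in the quantization built on the polarization P.) -/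
/-- Holomorphicity (with respect to the complex structure J associated to
V = V^P ⊕ V^P̄) of the wave function Y(ξ) = exp(iω(ξ^X, ξ⁺)) of the pseudo-state encoding
the change of vacuum from the polarization P to the polarization P′. -/
theorem stmt_15 (V : Type*) [AddCommGroup V] [Module ℂ V]
    (ω : V →ₗ[ℂ] V →ₗ[ℂ] ℂ)
    (hanti : ∀ x y : V, ω x y = - ω y x)
    (hnondeg : ∀ x : V, (∀ y : V, ω x y = 0) → x = 0)
    -- three Lagrangian subspaces V^P, V^P′, V^P̄
    (VP VP' VPb : Submodule ℂ V)
    (hPiso : ∀ x ∈ VP, ∀ y ∈ VP, ω x y = 0)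
    (hPcoiso : ∀ y : V, (∀ x ∈ VP, ω x y = 0) → y ∈ VP)
    (hP'iso : ∀ x ∈ VP', ∀ y ∈ VP', ω x y = 0)
    (hP'coiso : ∀ y : V, (∀ x ∈ VP', ω x y = 0) → y ∈ VP')
    (hPbiso : ∀ x ∈ VPb, ∀ y ∈ VPb, ω x y = 0)
    (hPbcoiso : ∀ y : V, (∀ x ∈ VPb, ω x y = 0) → y ∈ VPb)
    -- V = V^P ⊕ V^P̄ with projections ξ ↦ ξ⁺, ξ ↦ ξ⁻
    (pp pm : V →ₗ[ℂ] V)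
    (hpp : ∀ x : V, pp x ∈ VP) (hpm : ∀ x : V, pm x ∈ VPb)
    (hppm : ∀ x : V, pp x + pm x = x)
    (hdisjP : VP ⊓ VPb = ⊥)
    -- V = V^P′ ⊕ V^P̄ with projections ξ ↦ ξ^X, ξ ↦ ξ^M
    (pX pM : V →ₗ[ℂ] V)
    (hpX : ∀ x : V, pX x ∈ VP') (hpM : ∀ x : V, pM x ∈ VPb)
    (hpXM : ∀ x : V, pX x + pM x = x)
    (hdisjP' : VP' ⊓ VPb = ⊥)
    -- J = i·id on V^P, −i·id on V^P̄
    (J : V → V)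
    (hJ : ∀ x : V, J x = Complex.I • pp x - Complex.I • pm x)
    -- the wave function Y(ξ) = exp(iω(ξ^X, ξ⁺))
    (Y : V → ℂ)
    (hY : ∀ ξ : V, Y ξ = Complex.exp (Complex.I * ω (pX ξ) (pp ξ))) :
    -- Y is holomorphic with respect to J
    ∀ a b : V, Differentiable ℂ fun z : ℂ =>
      Y (a + (z.re : ℂ) • b + (z.im : ℂ) • J b) := by
  -- uniqueness of decompositions
  have huniqP : ∀ u v : V, u ∈ VP → v ∈ VPb → pp (u + v) = u ∧ pm (u + v) = v := by
    intro u v hu hv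
    have h1 : pp (u + v) - u = v - pm (u + v) := by
      have := hppm (u + v); linear_combination (norm := module) this
    have h2 : pp (u + v) - u ∈ VP ⊓ VPb := by
      constructor
      · exact VP.sub_mem (hpp _) hu
      · rw [h1]; exact VPb.sub_mem hv (hpm _)
    rw [hdisjP] at h2
    have h3 : pp (u + v) - u = 0 := h2
    constructor
    · linear_combination (norm := module) h3
    · have := hppm (u + v); linear_combination (norm := module) this - h3
  have huniqP' : ∀ u v : V, u ∈ VP' → v ∈ VPb → pX (u + v) = u := by
    intro u v hu hv
    have h1 : pX (u + v) - u = v - pM (u + v) := by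
      have := hpXM (u + v); linear_combination (norm := module) this
    have h2 : pX (u + v) - u ∈ VP' ⊓ VPb := by
      constructor
      · exact VP'.sub_mem (hpX _) hu
      · rw [h1]; exact VPb.sub_mem hv (hpM _)
    rw [hdisjP'] at h2
    have h3 : pX (u + v) - u = 0 := h2
    linear_combination (norm := module) h3
  intro a b
  have hppp : pp (pp b) = pp b := by
    have := (huniqP (pp b) 0 (hpp b) VPb.zero_mem).1; rwa [add_zero] at this
  have hppm0 : pp (pm b) = 0 := by
    have := (huniqP 0 (pm b) VP.zero_mem (hpm b)).1; rwa [zero_add] at this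
  have hpXpm0 : pX (pm b) = 0 := by
    have := huniqP' 0 (pm b) VP'.zero_mem (hpm b); rwa [zero_add] at this
  have hpXb : pX b = pX (pp b) := by
    conv_lhs => rw [← hppm b]
    rw [map_add, hpXpm0, add_zero]
  have key : ∀ z : ℂ, Y (a + (z.re : ℂ) • b + (z.im : ℂ) • J b)
      = Complex.exp (Complex.I * (ω (pX a) (pp a) + z * ω (pX a) (pp b)
          + z * ω (pX (pp b)) (pp a) + z * z * ω (pX (pp b)) (pp b))) := by
    intro z
    rw [hY, hJ]
    have hppz : pp (a + (z.re : ℂ) • b + (z.im : ℂ) • (Complex.I • pp b - Complex.I • pm b))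
        = pp a + z • pp b := by
      simp only [map_add, map_smul, map_sub, hppp, hppm0, smul_zero, sub_zero]
      rw [smul_smul, add_assoc, ← add_smul]
      rw [Complex.re_add_im]
    have hpXz : pX (a + (z.re : ℂ) • b + (z.im : ℂ) • (Complex.I • pp b - Complex.I • pm b))
        = pX a + z • pX (pp b) := by
      simp only [map_add, map_smul, map_sub, hpXb, hpXpm0, smul_zero, sub_zero]
      rw [smul_smul, add_assoc, ← add_smul]
      rw [Complex.re_add_im]
    rw [hppz, hpXz]
    congr 1
    simp only [map_add, map_smul, LinearMap.add_apply, LinearMap.smul_apply, smul_eq_mul]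
    ring
  rw [funext key]
  apply Differentiable.cexp
  fun_prop
end

section
/- Let (L, ω) be a real symplectic vector space and γ : L → L an ℝ-linear map with γ∘γ = id and ω(γ(φ), γ(η)) = −ω(φ, η); extend γ complex-linearly and ω complex-bilinearly to the complexification L^ℂ, and let α(x) := −i·conj(γ(x)) be the induced compatible real structure with fixed-point set L^α. Define I : L → L^ℂ by I(φ) := √2 · (1/2)(φ + α(φ)), which for φ ∈ L equals (1/√2)(φ − iγ(φ)) and takes values in L^α. Then ω(I(φ), I(η)) = ω(φ, η) for all φ, η ∈ L: the symplectic form pulled back along the identification I of L with L^α coincides with the original symplectic form. -/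
/-- For a reflection map γ on a real symplectic vector space (L, ω) with
induced compatible real structure α(x) = −i·conj(γ(x)) on L^ℂ, the identification
I(φ) := √2·(1/2)(φ + α(φ)) of L with L^α equals (1/√2)(φ − iγ(φ)) on L, takes values in
L^α, and pulls the symplectic form back to itself: ω(I(φ), I(η)) = ω(φ, η) for φ, η ∈ L.
The complexification L^ℂ is modelled as a complex vector space V with complex conjugation σ;
L is the fixed-point set of σ. -/
theorem stmt_18 (V : Type*) [AddCommGroup V] [Module ℂ V]
    -- complex conjugation on the complexification
    (σ : V → V)
    (hσadd : ∀ x y : V, σ (x + y) = σ x + σ y)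
    (hσsmul : ∀ (c : ℂ) (x : V), σ (c • x) = (starRingEnd ℂ c) • σ x)
    (hσinvol : ∀ x : V, σ (σ x) = x)
    -- the complex-bilinear extension of the symplectic form
    (ω : V →ₗ[ℂ] V →ₗ[ℂ] ℂ)
    (hanti : ∀ x y : V, ω x y = - ω y x)
    (hωσ : ∀ x y : V, ω (σ x) (σ y) = starRingEnd ℂ (ω x y))
    (hnondeg : ∀ x : V, σ x = x → (∀ y : V, σ y = y → ω x y = 0) → x = 0)
    -- the complex-linear extension of the reflection map γ
    (γ : V →ₗ[ℂ] V)
    (hγσ : ∀ x : V, γ (σ x) = σ (γ x))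
    (hγγ : ∀ x : V, γ (γ x) = x)
    (hγω : ∀ x y : V, ω (γ x) (γ y) = - ω x y)
    -- the induced compatible real structure α(x) = −i·conj(γ(x))
    (α : V → V)
    (hα : ∀ x : V, α x = -(Complex.I • σ (γ x)))
    -- the identification I(φ) = √2·(1/2)(φ + α(φ))
    (Iop : V → V)
    (hIop : ∀ x : V, Iop x = (Real.sqrt 2 : ℂ) • ((2:ℂ)⁻¹ • (x + α x))) :
    -- on L, I(φ) = (1/√2)(φ − iγ(φ))
    (∀ φ : V, σ φ = φ → Iop φ = ((Real.sqrt 2 : ℂ))⁻¹ • (φ - Complex.I • γ φ)) ∧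
    -- I takes values in L^α
    (∀ φ : V, σ φ = φ → α (Iop φ) = Iop φ) ∧
    -- the pulled-back symplectic form coincides with the original one
    (∀ φ η : V, σ φ = φ → σ η = η → ω (Iop φ) (Iop η) = ω φ η) := by

  have h2 : (Real.sqrt 2 : ℂ) * (Real.sqrt 2 : ℂ) = 2 := by
    norm_cast
    rw [Real.mul_self_sqrt (by norm_num : (0:ℝ) ≤ 2)]
  have hs : (Real.sqrt 2 : ℂ) ≠ 0 := by
    simp [Complex.ofReal_ne_zero, Real.sqrt_ne_zero']
  have key : ∀ φ : V, σ φ = φ → Iop φ = ((Real.sqrt 2 : ℂ))⁻¹ • (φ - Complex.I • γ φ) := by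
    intro φ hφ
    have hσγ : σ (γ φ) = γ φ := by rw [← hγσ, hφ]
    rw [hIop, hα, hσγ, smul_smul, sub_eq_add_neg]
    congr 1
    field_simp
    linear_combination h2
  refine ⟨key, ?_, ?_⟩
  · intro φ hφ
    have hσγ : σ (γ φ) = γ φ := by rw [← hγσ, hφ]
    rw [key φ hφ, hα]
    have e1 : γ ((Real.sqrt 2 : ℂ)⁻¹ • (φ - Complex.I • γ φ))
        = (Real.sqrt 2 : ℂ)⁻¹ • (γ φ - Complex.I • φ) := by
      simp [map_smul, map_sub, hγγ]
    have e2 : σ ((Real.sqrt 2 : ℂ)⁻¹ • (γ φ - Complex.I • φ))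
        = (Real.sqrt 2 : ℂ)⁻¹ • (γ φ + Complex.I • φ) := by
      have h3 : γ φ - Complex.I • φ = γ φ + (-Complex.I) • φ := by
        rw [neg_smul, sub_eq_add_neg]
      rw [hσsmul, h3, hσadd, hσsmul, hσγ, hφ]
      simp [Complex.conj_ofReal, Complex.conj_I]
    rw [e1, e2]
    match_scalars
    · field_simp
    · field_simp
      simp [Complex.I_sq]
  · intro φ η hφ hη
    have hcross : ω (γ φ) η = - ω φ (γ η) := by
      have := hγω φ (γ η); rwa [hγγ] at this
    rw [key φ hφ, key η hη]
    simp only [map_smul, map_sub, LinearMap.sub_apply, LinearMap.smul_apply, smul_eq_mul,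
      hγω, hcross]
    field_simp
    linear_combination ((ω φ) η * Complex.I ^ 2) * h2
      + ((ω φ) η - (ω φ) η * (Real.sqrt 2 : ℂ) ^ 2) * Complex.I_sq
end
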